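/- Let L > 0, let f : ℝ^d → ℝ^d satisfy the one-sided dissipative Lipschitz condition with constant L, let a ∈ ℝ with a ≠ 0, b ∈ ℝ^d, and let O : ℝ → ℝ be continuous. Let U₁, U₂ : [0, ∞) → ℝ^d be differentiable with U_i'(t) = e^{−aO(t)} f(e^{aO(t)} U_i(t) + (b/a)(e^{aO(t)} − 1)) + (a U_i(t) + b) O(t) for i = 1, 2 and all t ≥ 0. Then for all t ≥ 0, ‖U₁(t) − U₂(t)‖² ≤ exp(−2Lt + 2a∫_0^t O(τ) dτ) · ‖U₁(0) − U₂(0)‖². -/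

import Mathlib

open Real RealInnerProductSpace

/-- Pathwise contraction estimate: any two solutions of the transformed random
differential equation satisfy
`‖U₁(t) − U₂(t)‖² ≤ exp(−2Lt + 2a∫₀ᵗ O) ‖U₁(0) − U₂(0)‖²`. -/
theorem stmt_11 {d : ℕ} (L : ℝ) (hL : 0 < L)
    (f : EuclideanSpace ℝ (Fin d) → EuclideanSpace ℝ (Fin d))
    (hf : ∀ x y : EuclideanSpace ℝ (Fin d), ⟪x - y, f x - f y⟫ ≤ -L * ‖x - y‖ ^ 2)
    (a : ℝ) (ha : a ≠ 0) (b : EuclideanSpace ℝ (Fin d))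
    (O : ℝ → ℝ) (hO : Continuous O)
    (U₁ U₂ : ℝ → EuclideanSpace ℝ (Fin d))
    (hU₁ : ∀ t : ℝ, 0 ≤ t → HasDerivAt U₁
      (Real.exp (-(a * O t)) •
          f (Real.exp (a * O t) • U₁ t + (Real.exp (a * O t) - 1) • (a⁻¹ • b))
        + O t • (a • U₁ t + b)) t)
    (hU₂ : ∀ t : ℝ, 0 ≤ t → HasDerivAt U₂
      (Real.exp (-(a * O t)) •
          f (Real.exp (a * O t) • U₂ t + (Real.exp (a * O t) - 1) • (a⁻¹ • b))
        + O t • (a • U₂ t + b)) t) :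
    ∀ t : ℝ, 0 ≤ t →
      ‖U₁ t - U₂ t‖ ^ 2 ≤
        Real.exp (-(2 * L * t) + 2 * a * ∫ τ in (0:ℝ)..t, O τ) *
          ‖U₁ 0 - U₂ 0‖ ^ 2 := by
  intro t ht
  set U : ℝ → EuclideanSpace ℝ (Fin d) := fun s => U₁ s - U₂ s with hU
  set x₁ : ℝ → EuclideanSpace ℝ (Fin d) := fun s =>
    Real.exp (a * O s) • U₁ s + (Real.exp (a * O s) - 1) • (a⁻¹ • b) with hx₁
  set x₂ : ℝ → EuclideanSpace ℝ (Fin d) := fun s =>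
    Real.exp (a * O s) • U₂ s + (Real.exp (a * O s) - 1) • (a⁻¹ • b) with hx₂
  set D : ℝ → EuclideanSpace ℝ (Fin d) := fun s =>
    Real.exp (-(a * O s)) • (f (x₁ s) - f (x₂ s)) + (O s * a) • U s with hD
  have hI : ∀ s : ℝ, HasDerivAt (fun u => ∫ τ in (0:ℝ)..u, O τ) (O s) s := fun s =>
    intervalIntegral.integral_hasDerivAt_right (hO.intervalIntegrable _ _)
      (hO.stronglyMeasurableAtFilter _ _) hO.continuousAt
  set g : ℝ → ℝ := fun s => Real.exp (2 * L * s - 2 * a * ∫ τ in (0:ℝ)..s, O τ) with hg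
  have hgd : ∀ s : ℝ, HasDerivAt g (g s * (2 * L - 2 * a * O s)) s := by
    intro s
    have h1 : HasDerivAt (fun u : ℝ => 2 * L * u - 2 * a * ∫ τ in (0:ℝ)..u, O τ)
        (2 * L - 2 * a * O s) s := by
      have := ((hasDerivAt_id s).const_mul (2 * L)).sub ((hI s).const_mul (2 * a))
      simp only [mul_one] at this
      exact this
    simpa [hg] using h1.exp
  have hUd : ∀ s : ℝ, 0 ≤ s → HasDerivAt U (D s) s := by
    intro s hs
    have h := (hU₁ s hs).sub (hU₂ s hs)
    refine h.congr_deriv ?_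
    simp only [hD, hU, hx₁, hx₂]
    module
  -- key inner product bound
  have hkey : ∀ s : ℝ, 0 ≤ s → ⟪U s, D s⟫ ≤ (-L + a * O s) * ⟪U s, U s⟫ := by
    intro s hs
    have hdx : x₁ s - x₂ s = Real.exp (a * O s) • U s := by
      simp only [hx₁, hx₂, hU]; module
    have h1 := hf (x₁ s) (x₂ s)
    rw [hdx] at h1
    have hE : (0:ℝ) < Real.exp (a * O s) := Real.exp_pos _
    rw [real_inner_smul_left, norm_smul] at h1
    have h2 : ⟪U s, f (x₁ s) - f (x₂ s)⟫ ≤ -L * Real.exp (a * O s) * ‖U s‖ ^ 2 := by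
      refine (mul_le_mul_iff_of_pos_left hE).mp ?_
      calc Real.exp (a * O s) * ⟪U s, f (x₁ s) - f (x₂ s)⟫
            ≤ -L * (‖Real.exp (a * O s)‖ * ‖U s‖) ^ 2 := h1
          _ = Real.exp (a * O s) * (-L * Real.exp (a * O s) * ‖U s‖ ^ 2) := by
              rw [Real.norm_eq_abs, abs_of_pos hE]; ring
    have h3 : Real.exp (-(a * O s)) * ⟪U s, f (x₁ s) - f (x₂ s)⟫ ≤ -L * ‖U s‖ ^ 2 := by
      have := mul_le_mul_of_nonneg_left h2 (Real.exp_pos (-(a * O s))).le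
      calc Real.exp (-(a * O s)) * ⟪U s, f (x₁ s) - f (x₂ s)⟫
          ≤ Real.exp (-(a * O s)) * (-L * Real.exp (a * O s) * ‖U s‖ ^ 2) := this
        _ = -L * ‖U s‖ ^ 2 := by
            rw [show Real.exp (-(a * O s)) * (-L * Real.exp (a * O s) * ‖U s‖ ^ 2)
              = (Real.exp (-(a * O s)) * Real.exp (a * O s)) * (-L * ‖U s‖ ^ 2) by ring,
              ← Real.exp_add]
            simp
    have hDexp : ⟪U s, D s⟫
        = Real.exp (-(a * O s)) * ⟪U s, f (x₁ s) - f (x₂ s)⟫ + (O s * a) * ⟪U s, U s⟫ := by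
      simp only [hD, inner_add_right, real_inner_smul_right]
    rw [hDexp, real_inner_self_eq_norm_sq]
    nlinarith [h3]
  -- E is antitone on [0, ∞)
  set E : ℝ → ℝ := fun s => g s * ⟪U s, U s⟫ with hE
  have hEd : ∀ s : ℝ, 0 ≤ s →
      HasDerivAt E (g s * (2 * L - 2 * a * O s) * ⟪U s, U s⟫
        + g s * (⟪U s, D s⟫ + ⟪D s, U s⟫)) s := by
    intro s hs
    exact (hgd s).mul ((hUd s hs).inner ℝ (hUd s hs))
  have hEanti : AntitoneOn E (Set.Ici (0:ℝ)) := by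
    apply antitoneOn_of_deriv_nonpos (convex_Ici 0)
    · intro s hs
      exact ((hEd s hs).continuousAt).continuousWithinAt
    · intro s hs
      rw [interior_Ici] at hs
      exact ((hEd s (le_of_lt hs)).differentiableAt).differentiableWithinAt
    · intro s hs
      rw [interior_Ici] at hs
      rw [(hEd s (le_of_lt hs)).deriv]
      have hg0 : 0 < g s := Real.exp_pos _
      have hsym : ⟪D s, U s⟫ = ⟪U s, D s⟫ := real_inner_comm _ _
      have hUU : (0:ℝ) ≤ ⟪U s, U s⟫ := real_inner_self_nonneg
      have hk := hkey s (le_of_lt hs)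
      nlinarith [hk, hg0, hUU]
  have hle : E t ≤ E 0 := hEanti (Set.mem_Ici.mpr le_rfl) (Set.mem_Ici.mpr ht) ht
  have hE0 : E 0 = ⟪U 0, U 0⟫ := by
    simp [hE, hg]
  rw [hE0] at hle
  have hgt : 0 < g t := Real.exp_pos _
  have hfin : Real.exp (-(2 * L * t) + 2 * a * ∫ τ in (0:ℝ)..t, O τ) = (g t)⁻¹ := by
    rw [hg, ← Real.exp_neg]; ring_nf
  rw [← real_inner_self_eq_norm_sq, ← real_inner_self_eq_norm_sq, hfin,
    le_inv_mul_iff₀ hgt]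
  exact hle
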